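/- Let Σ be a varietor on a category C with free-algebra monad Σ◇ (unit η, free algebra (Σ◇I, α_I) on I), and assume C is cocomplete and cowellpowered with an (E,M)-factorisation system in which E consists of epimorphisms. A Σ-tree automaton A = (Q,δ,i,o) is minimal if and only if A (with its quotient map given by the reachability map rch_A) is the minimisation of the automaton (Σ◇I, α_I, η_I, L(A)). -/

import Mathlib

open CategoryTheory CategoryTheory.Limits

universe v u

namespace TreeAutPaper

variable {C : Type u} [Category.{v} C]

/-- A representative of a quotient of `X` lying in the class `E`:
an epimorphism out of `X` belonging to `E`. -/
structure EQuot (E : MorphismProperty C) (X : C) where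
  obj : C
  hom : X ⟶ obj
  epi : Epi hom
  mem : E hom

/-- The order on quotients: `q ≤ r` iff `r = h ∘ q` for some `h`. -/
def EQuot.le {E : MorphismProperty C} {X : C} (q r : EQuot E X) : Prop :=
  ∃ h : q.obj ⟶ r.obj, q.hom ≫ h = r.hom

/-- Two quotient representatives are equivalent when each is below the other. -/
def EQuot.equiv {E : MorphismProperty C} {X : C} (q r : EQuot E X) : Prop :=
  q.le r ∧ r.le q

/-- `C` is cowellpowered: quotients (epimorphisms out of an object, up to equivalence)
of every object form a set (an essentially `v`-small collection). -/
def Cowellpowered (C : Type u) [Category.{v} C] : Prop :=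
  ∀ X : C, Small.{v} (Quot (fun q r : EQuot (⊤ : MorphismProperty C) X => EQuot.equiv q r))

/-- An `(E,M)`-factorisation system: both classes are closed under composition with
isomorphisms, every morphism factors as an `E`-morphism followed by an `M`-morphism, and
we have a unique diagonal fill-in property. -/
structure IsFactorizationSystem (E M : MorphismProperty C) : Prop where
  respectsIso_E : E.RespectsIso
  respectsIso_M : M.RespectsIso
  factor : ∀ {X Y : C} (f : X ⟶ Y), ∃ (Z : C) (e : X ⟶ Z) (m : Z ⟶ Y), E e ∧ M m ∧ e ≫ m = f
  diag : ∀ {A B X Y : C} (e : A ⟶ B) (m : X ⟶ Y) (f : A ⟶ X) (g : B ⟶ Y),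
    E e → M m → f ≫ m = e ≫ g → ∃! d : B ⟶ X, e ≫ d = f ∧ d ≫ m = g

/-- `S` preserves `E`-cointersections, i.e. wide pushouts of families of epimorphisms
lying in `E`. -/
def PreservesECointersections (E : MorphismProperty C) (S : C ⥤ C) : Prop :=
  ∀ (J : Type (max u v)) (X : C) (objs : J → C) (arrows : ∀ j : J, X ⟶ objs j),
    (∀ j, E (arrows j)) → (∀ j, Epi (arrows j)) →
    ∀ c : Cocone (WidePushoutShape.wideSpan X objs arrows),
      Nonempty (IsColimit c) → Nonempty (IsColimit (S.mapCocone c))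

/-- `f : ΣX ⟶ Y` factors through (the image under `Σ` of) the quotient `q`. -/
def FactorsThru {E : MorphismProperty C} (S : C ⥤ C) {X Y : C} (f : S.obj X ⟶ Y)
    (q : EQuot E X) : Prop :=
  ∃ g : S.obj q.obj ⟶ Y, S.map q.hom ≫ g = f

/-- `q` is the `E`-cobase of `f : ΣX ⟶ Y`: the greatest quotient of `X` in `E`
through whose `Σ`-image `f` factors. -/
def IsCobase (E : MorphismProperty C) (S : C ⥤ C) {X Y : C} (f : S.obj X ⟶ Y)
    (q : EQuot E X) : Prop :=
  FactorsThru S f q ∧ ∀ r : EQuot E X, FactorsThru S f r → r.le q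

variable (Sg : C ⥤ C)

/-- A `Σ`-tree automaton over input object `I` and output object `O`. -/
structure TreeAut (I O : C) where
  Q : Endofunctor.Algebra Sg
  i : I ⟶ Q.a
  o : Q.a ⟶ O

variable {Sg} {I O : C}

/-- `h` is a homomorphism of automata from `A` to `B`. -/
structure IsAutHom (A B : TreeAut Sg I O) (h : A.Q.a ⟶ B.Q.a) : Prop where
  alg : Sg.map h ≫ B.Q.str = A.Q.str ≫ h
  hi : A.i ≫ h = B.i
  ho : h ≫ B.o = A.o

/-- `(B, q)` is a quotient automaton of `A`: `q` is an epimorphism lying in `E`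
which is a homomorphism of automata. -/
structure IsQuotAut (E : MorphismProperty C) (A B : TreeAut Sg I O)
    (q : A.Q.a ⟶ B.Q.a) : Prop where
  isHom : IsAutHom A B q
  epi : Epi q
  mem : E q

/-- `(M, qm)` is the minimisation of `A`: a quotient automaton through which every
quotient automaton of `A` factors by a (necessarily unique) automaton homomorphism. -/
def IsMinimisation (E : MorphismProperty C) (A M : TreeAut Sg I O)
    (qm : A.Q.a ⟶ M.Q.a) : Prop :=
  IsQuotAut E A M qm ∧
    ∀ (B : TreeAut Sg I O) (q' : A.Q.a ⟶ B.Q.a), IsQuotAut E A B q' →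
      ∃! h : B.Q.a ⟶ M.Q.a, IsAutHom B M h ∧ q' ≫ h = qm

/-- `A` is simple: every quotient automaton of `A` has its quotient map an isomorphism. -/
def IsSimple (E : MorphismProperty C) (A : TreeAut Sg I O) : Prop :=
  ∀ (B : TreeAut Sg I O) (q : A.Q.a ⟶ B.Q.a), IsQuotAut E A B q → IsIso q

section Varietor

variable (Fr : C ⥤ Endofunctor.Algebra Sg) (adj : Fr ⊣ Endofunctor.Algebra.forget Sg)

/-- The reachability map of an automaton: the underlying morphism of the adjoint
transpose of the initial-state assignment. -/
def rch (A : TreeAut Sg I O) : (Fr.obj I).a ⟶ A.Q.a :=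
  ((adj.homEquiv I A.Q).symm A.i).f

/-- The language of an automaton. -/
def lang (A : TreeAut Sg I O) : (Fr.obj I).a ⟶ O :=
  rch Fr adj A ≫ A.o

/-- The automaton `(Σ◇I, α_I, η_I, L)` on the free `Σ`-algebra over `I`. -/
def freeAut (L : (Fr.obj I).a ⟶ O) : TreeAut Sg I O :=
  { Q := Fr.obj I
    i := adj.unit.app I
    o := L }

/-- `A` is reachable: its reachability map lies in `E`. -/
def Reachable (E : MorphismProperty C) (A : TreeAut Sg I O) : Prop :=
  E (rch Fr adj A)

/-- `A` is minimal: reachable, and every reachable automaton with the same language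
admits a (necessarily unique) automaton homomorphism into `A`. -/
def Minimal (E : MorphismProperty C) (A : TreeAut Sg I O) : Prop :=
  Reachable Fr adj E A ∧
    ∀ B : TreeAut Sg I O, Reachable Fr adj E B → lang Fr adj B = lang Fr adj A →
      ∃! h : B.Q.a ⟶ A.Q.a, IsAutHom B A h

end Varietor



section AuxLemmas
variable {C : Type u} [Category.{v} C] {Sg : C ⥤ C}
variable (Fr : C ⥤ Endofunctor.Algebra Sg) (adj : Fr ⊣ Endofunctor.Algebra.forget Sg)
variable {I O : C}

lemma rch_alg (A : TreeAut Sg I O) :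
    Sg.map (rch Fr adj A) ≫ A.Q.str = (Fr.obj I).str ≫ rch Fr adj A :=
  ((adj.homEquiv I A.Q).symm A.i).h

lemma unit_rch (A : TreeAut Sg I O) :
    adj.unit.app I ≫ rch Fr adj A = A.i := by
  have h2 : adj.homEquiv I A.Q ((adj.homEquiv I A.Q).symm A.i) = A.i :=
    (adj.homEquiv I A.Q).apply_symm_apply A.i
  rw [adj.homEquiv_unit] at h2
  exact h2

lemma rch_unique (A : TreeAut Sg I O) (h : (Fr.obj I).a ⟶ A.Q.a)
    (halg : Sg.map h ≫ A.Q.str = (Fr.obj I).str ≫ h)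
    (hu : adj.unit.app I ≫ h = A.i) : h = rch Fr adj A := by
  let k : Fr.obj I ⟶ A.Q := ⟨h, halg⟩
  have hk : adj.homEquiv I A.Q k = A.i := by
    rw [adj.homEquiv_unit]; exact hu
  have : k = (adj.homEquiv I A.Q).symm A.i := by
    rw [← hk, Equiv.symm_apply_apply]
  exact congrArg Endofunctor.Algebra.Hom.f this

/-- Any automaton homomorphism commutes with reachability maps. -/
lemma rch_comp {A B : TreeAut Sg I O} (h : A.Q.a ⟶ B.Q.a) (hh : IsAutHom A B h) :
    rch Fr adj A ≫ h = rch Fr adj B := by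
  apply rch_unique
  · rw [Sg.map_comp, Category.assoc, hh.alg, ← Category.assoc, rch_alg, Category.assoc]
  · calc _ = (adj.unit.app I ≫ rch Fr adj A) ≫ h := (Category.assoc _ _ _).symm
      _ = B.i := by rw [unit_rch, hh.hi]

lemma rch_isAutHom (A : TreeAut Sg I O) :
    IsAutHom (freeAut Fr adj (lang Fr adj A)) A (rch Fr adj A) :=
  ⟨rch_alg Fr adj A, unit_rch Fr adj A, rfl⟩

end AuxLemmas

/-- Under the standing assumptions (C cocomplete and cowellpowered,
with an (E,M)-factorisation system where E consists of epimorphisms, Σ a varietor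
witnessed by the adjunction `adj`), a Σ-tree automaton `A` is minimal if and only if
`A`, with quotient map its reachability map, is the minimisation of the automaton
`(Σ◇I, α_I, η_I, L(A))`. -/
theorem minimal_iff_minimisation_of_freeAut
    {C : Type u} [Category.{v} C] [HasColimits C] (hcwp : Cowellpowered C)
    (E M : MorphismProperty C) (hfs : IsFactorizationSystem E M)
    (hE : ∀ ⦃X Y : C⦄ (f : X ⟶ Y), E f → Epi f)
    {Sg : C ⥤ C} (Fr : C ⥤ Endofunctor.Algebra Sg)
    (adj : Fr ⊣ Endofunctor.Algebra.forget Sg)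
    {I O : C} (A : TreeAut Sg I O) :
    Minimal Fr adj E A ↔
      IsMinimisation E (freeAut Fr adj (lang Fr adj A)) A (rch Fr adj A) := by
  constructor
  · rintro ⟨hreach, hmin⟩
    refine ⟨⟨rch_isAutHom Fr adj A, hE _ hreach, hreach⟩, ?_⟩
    intro B q' hq'
    have hq'eq : q' = rch Fr adj B :=
      rch_unique Fr adj B q' hq'.isHom.alg hq'.isHom.hi
    have hlangB : lang Fr adj B = lang Fr adj A := by
      have := hq'.isHom.ho
      rw [hq'eq] at this
      exact this
    obtain ⟨h, hh, huniq⟩ := hmin B (show E (rch Fr adj B) from hq'eq ▸ hq'.mem) hlangB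
    refine ⟨h, ⟨hh, ?_⟩, fun y hy => huniq y hy.1⟩
    rw [hq'eq]
    exact rch_comp Fr adj h hh
  · rintro ⟨⟨hhom, hepi, hmem⟩, huniv⟩
    refine ⟨hmem, ?_⟩
    intro B hreachB hlangB
    have hqB : IsQuotAut E (freeAut Fr adj (lang Fr adj A)) B (rch Fr adj B) := by
      refine ⟨⟨rch_alg Fr adj B, unit_rch Fr adj B, ?_⟩, hE _ hreachB, hreachB⟩
      exact hlangB
    obtain ⟨h, ⟨hh, _⟩, huniq⟩ := huniv B (rch Fr adj B) hqB
    exact ⟨h, hh, fun y hy => huniq y ⟨hy, rch_comp Fr adj y hy⟩⟩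

end TreeAutPaper
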